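/- Let 0 < β ≤ γ ≤ 1 and let n = (n_k)_{k≥0} be a strictly increasing sequence of positive integers. Then dim_A C(β,γ,n) ≤ γ. -/

import Mathlib

open Filter MeasureTheory Metric Set ENNReal Classical
open scoped Topology

noncomputable section

/-- `coverNumber δ A` is the smallest number of sets of diameter at most `δ`
needed to cover `A`. -/
noncomputable def coverNumber {X : Type*} [MetricSpace X] (δ : ℝ) (A : Set X) : ℕ :=
  sInf {n : ℕ | ∃ f : Fin n → Set X, A ⊆ ⋃ i, f i ∧ ∀ i, Metric.diam (f i) ≤ δ}

/-- Lower box dimension. -/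
noncomputable def lowerBoxDim {X : Type*} [MetricSpace X] (A : Set X) : ℝ :=
  Filter.liminf (fun δ : ℝ => Real.log (coverNumber δ A : ℝ) / (-Real.log δ)) (𝓝[>] (0:ℝ))

/-- Upper box dimension. -/
noncomputable def upperBoxDim {X : Type*} [MetricSpace X] (A : Set X) : ℝ :=
  Filter.limsup (fun δ : ℝ => Real.log (coverNumber δ A : ℝ) / (-Real.log δ)) (𝓝[>] (0:ℝ))

/-- Lower modified box dimension: the infimum over countable covers of `A` by bounded
sets of the supremum of the lower box dimensions of the pieces. -/
noncomputable def lowerMBDim {X : Type*} [MetricSpace X] (A : Set X) : ℝ :=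
  sInf {d : ℝ | ∃ E : ℕ → Set X, A ⊆ ⋃ i, E i ∧
    ∀ i, Bornology.IsBounded (E i) ∧ lowerBoxDim (E i) ≤ d}

/-- The packing pre-premeasure at scale `δ`: supremum of `Σ (2 rᵢ)^α` over countable
families of pairwise disjoint closed balls centred in `A` with radii in `(0, δ]`. -/
noncomputable def packingPreAt {X : Type*} [MetricSpace X] (α δ : ℝ) (A : Set X) : ℝ≥0∞ :=
  ⨆ (t : Set ℕ) (x : ℕ → X) (r : ℕ → ℝ)
    (_ : ∀ i ∈ t, x i ∈ A ∧ 0 < r i ∧ r i ≤ δ)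
    (_ : t.PairwiseDisjoint fun i => Metric.closedBall (x i) (r i)),
    ∑' i : t, ENNReal.ofReal ((2 * r (i : ℕ)) ^ α)

/-- The `α`-dimensional packing premeasure. -/
noncomputable def packingPre {X : Type*} [MetricSpace X] (α : ℝ) (A : Set X) : ℝ≥0∞ :=
  ⨅ (δ : ℝ) (_ : 0 < δ), packingPreAt α δ A

/-- The `α`-dimensional packing measure. -/
noncomputable def packingMeasure {X : Type*} [MetricSpace X] (α : ℝ) (A : Set X) : ℝ≥0∞ :=
  ⨅ (E : ℕ → Set X) (_ : A ⊆ ⋃ i, E i), ∑' i, packingPre α (E i)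

/-- The packing dimension. -/
noncomputable def packingDim {X : Type*} [MetricSpace X] (A : Set X) : ℝ :=
  sInf {α : ℝ | 0 ≤ α ∧ packingMeasure α A = 0}

/-- The Assouad dimension. -/
noncomputable def assouadDim {X : Type*} [MetricSpace X] (A : Set X) : ℝ :=
  sInf {α : ℝ | 0 ≤ α ∧ ∃ c ρ : ℝ, 0 < c ∧ 0 < ρ ∧
    ∀ r R : ℝ, 0 < r → r < R → R ≤ ρ → ∀ x ∈ A,
      (coverNumber r (Metric.ball x R ∩ A) : ℝ) ≤ c * (R / r) ^ α}

/-- The contraction ratio `c_m` of the construction `C(β,γ,n)`: it equals `2^{-1/γ}` if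
`n_{2k+1} ≤ m < n_{2k+2}` for some `k`, and `2^{-1/β}` otherwise. -/
noncomputable def cseq (β γ : ℝ) (n : ℕ → ℕ) (m : ℕ) : ℝ :=
  if ∃ k, n (2*k+1) ≤ m ∧ m < n (2*k+2) then (2:ℝ) ^ (-(1/γ)) else (2:ℝ) ^ (-(1/β))

/-- The map `S_v(x) = c x + v (1 - c)` for `v ∈ {0,1}`. -/
noncomputable def Smap (c : ℝ) (v : Bool) (x : ℝ) : ℝ :=
  c * x + (if v then 1 - c else 0)

/-- `Iaux β γ n m w = S_{m,w_1}(S_{m+1,w_2}(⋯ (S_{m+len-1,w_len}([0,1]))))`. -/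
noncomputable def Iaux (β γ : ℝ) (n : ℕ → ℕ) : ℕ → List Bool → Set ℝ
  | _, [] => Set.Icc 0 1
  | m, v :: w => Smap (cseq β γ n m) v '' Iaux β γ n (m + 1) w

/-- The interval `I_w = S_{1,w_1} ∘ ⋯ ∘ S_{m,w_m}([0,1])` for a binary word `w`. -/
noncomputable def Iw (β γ : ℝ) (n : ℕ → ℕ) (w : List Bool) : Set ℝ :=
  Iaux β γ n 1 w

/-- `C_m(β,γ,n)`: union of the intervals `I_w` over binary words of length `m`. -/
noncomputable def CsetN (β γ : ℝ) (n : ℕ → ℕ) (m : ℕ) : Set ℝ :=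
  ⋃ w ∈ {w : List Bool | w.length = m}, Iw β γ n w

/-- The set `C(β,γ,n) = ⋂_m C_m(β,γ,n)`. -/
noncomputable def Cset (β γ : ℝ) (n : ℕ → ℕ) : Set ℝ :=
  ⋂ m, CsetN β γ n m

set_option linter.unusedSectionVars false
set_option linter.deprecated false

section Aux
variable {β γ : ℝ} (n : ℕ → ℕ) (hβ : 0 < β) (hβγ : β ≤ γ) (hγ1 : γ ≤ 1)

noncomputable def prodC (β γ : ℝ) (n : ℕ → ℕ) (m p : ℕ) : ℝ :=
  ∏ j ∈ Finset.range p, cseq β γ n (m + j)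

noncomputable def lE (β γ : ℝ) (n : ℕ → ℕ) : ℕ → List Bool → ℝ
  | _, [] => 0
  | m, v :: t => cseq β γ n m * lE β γ n (m+1) t + (if v then 1 - cseq β γ n m else 0)

include hβ in
lemma cseq_pos (m : ℕ) : 0 < cseq β γ n m := by
  unfold cseq; split <;> positivity

include hβ hβγ in
lemma cseq_ge (m : ℕ) : (2:ℝ) ^ (-(1/β)) ≤ cseq β γ n m := by
  have hγ : 0 < γ := lt_of_lt_of_le hβ hβγ
  have h : -(1/β) ≤ -(1/γ) := by
    have := one_div_le_one_div_of_le hβ hβγ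
    linarith
  unfold cseq; split
  · exact Real.rpow_le_rpow_of_exponent_le one_le_two h
  · exact le_rfl

include hβ hβγ in
lemma cseq_le (m : ℕ) : cseq β γ n m ≤ (2:ℝ) ^ (-(1/γ)) := by
  have h : -(1/β) ≤ -(1/γ) := by
    have := one_div_le_one_div_of_le hβ hβγ
    linarith
  unfold cseq; split
  · exact le_rfl
  · exact Real.rpow_le_rpow_of_exponent_le one_le_two h

omit n in
include hβ hβγ hγ1 in
lemma cγ_le_half : (2:ℝ) ^ (-(1/γ)) ≤ 1/2 := by
  have hγ : 0 < γ := lt_of_lt_of_le hβ hβγ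
  have h1 : (1:ℝ) ≤ 1/γ := by
    exact one_le_one_div hγ hγ1
  have : (2:ℝ) ^ (-(1/γ)) ≤ (2:ℝ) ^ (-(1:ℝ)) :=
    Real.rpow_le_rpow_of_exponent_le one_le_two (by linarith)
  calc (2:ℝ) ^ (-(1/γ)) ≤ (2:ℝ) ^ (-(1:ℝ)) := this
    _ = 1/2 := by
        rw [Real.rpow_neg_one]; norm_num

include hβ hβγ hγ1 in
lemma cseq_le_half (m : ℕ) : cseq β γ n m ≤ 1/2 :=
  le_trans (cseq_le n hβ hβγ m) (cγ_le_half hβ hβγ hγ1)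

end Aux

set_option linter.unusedSectionVars false

section Aux2
variable {β γ : ℝ} {n : ℕ → ℕ} (hβ : 0 < β) (hβγ : β ≤ γ) (hγ1 : γ ≤ 1)

lemma prodC_zero (m : ℕ) : prodC β γ n m 0 = 1 := by simp [prodC]

lemma prodC_succ (m p : ℕ) :
    prodC β γ n m (p+1) = cseq β γ n m * prodC β γ n (m+1) p := by
  unfold prodC
  rw [Finset.prod_range_succ', mul_comm]
  congr 1
  apply Finset.prod_congr rfl
  intro j _
  congr 1
  omega

lemma prodC_one (m : ℕ) : prodC β γ n m 1 = cseq β γ n m := by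
  simp [prodC]

lemma prodC_add (m p k : ℕ) :
    prodC β γ n m (p + k) = prodC β γ n m p * prodC β γ n (m + p) k := by
  unfold prodC
  rw [Finset.prod_range_add]
  congr 1
  apply Finset.prod_congr rfl
  intro j _
  congr 1
  omega

include hβ in
lemma prodC_pos (m p : ℕ) : 0 < prodC β γ n m p := by
  unfold prodC
  exact Finset.prod_pos fun j _ => cseq_pos n hβ _

include hβ hβγ in
lemma prodC_le_pow (m p : ℕ) : prodC β γ n m p ≤ ((2:ℝ) ^ (-(1/γ)))^p := by
  unfold prodC
  calc (∏ j ∈ Finset.range p, cseq β γ n (m + j))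
      ≤ ∏ j ∈ Finset.range p, (2:ℝ) ^ (-(1/γ)) := by
        apply Finset.prod_le_prod
        · intro j _; exact (cseq_pos n hβ _).le
        · intro j _; exact cseq_le n hβ hβγ _
    _ = ((2:ℝ) ^ (-(1/γ)))^p := by
        rw [Finset.prod_const, Finset.card_range]

include hβ hβγ hγ1 in
lemma prodC_le_one (m p : ℕ) : prodC β γ n m p ≤ 1 := by
  unfold prodC
  apply Finset.prod_le_one
  · intro j _; exact (cseq_pos n hβ _).le
  · intro j _
    exact le_trans (cseq_le_half n hβ hβγ hγ1 _) (by norm_num)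

include hβ hβγ hγ1 in
lemma Iaux_struct : ∀ (w : List Bool) (m : ℕ),
    Iaux β γ n m w = Set.Icc (lE β γ n m w) (lE β γ n m w + prodC β γ n m w.length)
    ∧ 0 ≤ lE β γ n m w ∧ lE β γ n m w + prodC β γ n m w.length ≤ 1 := by
  intro w
  induction w with
  | nil =>
    intro m
    refine ⟨?_, le_rfl, ?_⟩ <;> simp [Iaux, lE, prodC_zero]
  | cons v t ih =>
    intro m
    obtain ⟨hEq, h0, h1⟩ := ih (m+1)
    set c := cseq β γ n m with hc
    have hc0 : 0 < c := cseq_pos n hβ m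
    have hch : c ≤ 1/2 := cseq_le_half n hβ hβγ hγ1 m
    set a := lE β γ n (m+1) t with ha
    set P := prodC β γ n (m+1) t.length with hP
    have hP0 : 0 < P := prodC_pos hβ _ _
    set tv := (if v then 1 - c else 0 : ℝ) with htv
    have htv0 : 0 ≤ tv := by
      rw [htv]; split <;> linarith
    have himg : Iaux β γ n m (v :: t) = Set.Icc (c*a + tv) (c*(a+P) + tv) := by
      show Smap c v '' Iaux β γ n (m+1) t = _
      rw [hEq]
      have : Smap c v = fun x => c * x + tv := by
        funext x; simp [Smap, htv]
      rw [this]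
      exact Set.image_affine_Icc' hc0 tv a (a+P)
    have hlE : lE β γ n m (v :: t) = c * a + tv := by
      simp [lE, ← hc, ← ha, ← htv]
    have hlen : prodC β γ n m (v :: t).length = c * P := by
      rw [List.length_cons, prodC_succ]
    refine ⟨?_, ?_, ?_⟩
    · rw [himg, hlE, hlen]
      ring_nf
    · rw [hlE]; positivity
    · rw [hlE, hlen]
      have : c * (a + P) ≤ c * 1 := by
        apply mul_le_mul_of_nonneg_left h1 hc0.le
      have htv1 : tv ≤ 1 - c := by
        rw [htv]; split <;> linarith
      nlinarith

end Aux2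

section Aux3
variable {β γ : ℝ} {n : ℕ → ℕ} (hβ : 0 < β) (hβγ : β ≤ γ) (hγ1 : γ ≤ 1)

include hβ hβγ hγ1 in
lemma sep : ∀ (w w' : List Bool), w.length = w'.length → w ≠ w' → ∀ m,
    lE β γ n m w + prodC β γ n m w.length ≤ lE β γ n m w' ∨
    lE β γ n m w' + prodC β γ n m w'.length ≤ lE β γ n m w := by
  intro w
  induction w with
  | nil =>
    intro w' hl hne m
    cases w' with
    | nil => exact absurd rfl hne
    | cons v' t' => simp at hl
  | cons v t ih =>
    intro w' hl hne m
    match w' with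
    | [] => simp at hl
    | v' :: t' =>
      simp only [List.length_cons, Nat.add_right_cancel_iff] at hl
      have hc0 : 0 < cseq β γ n m := cseq_pos n hβ m
      have hch : cseq β γ n m ≤ 1/2 := cseq_le_half n hβ hβγ hγ1 m
      have ha0 : 0 ≤ lE β γ n (m+1) t := (Iaux_struct hβ hβγ hγ1 t (m+1)).2.1
      have ha0' : 0 ≤ lE β γ n (m+1) t' := (Iaux_struct hβ hβγ hγ1 t' (m+1)).2.1
      have ha1 : lE β γ n (m+1) t + prodC β γ n (m+1) t.length ≤ 1 :=
        (Iaux_struct hβ hβγ hγ1 t (m+1)).2.2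
      have ha1' : lE β γ n (m+1) t' + prodC β γ n (m+1) t'.length ≤ 1 :=
        (Iaux_struct hβ hβγ hγ1 t' (m+1)).2.2
      have hP0 : 0 < prodC β γ n (m+1) t'.length := prodC_pos hβ _ _
      rw [hl] at ha1
      simp only [lE, List.length_cons, prodC_succ]
      rw [hl]
      by_cases hv : v = v'
      · subst hv
        have htne : t ≠ t' := fun h => hne (by rw [h])
        rcases ih t' hl htne (m+1) with h | h
        · left
          rw [hl] at h
          have h2 := mul_le_mul_of_nonneg_left h hc0.le
          rw [mul_add] at h2
          linarith
        · right
          have h2 := mul_le_mul_of_nonneg_left h hc0.le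
          rw [mul_add] at h2
          linarith
      · cases v with
        | false =>
          have hv' : v' = true := by
            cases v' <;> simp_all
          subst hv'
          left
          norm_num
          nlinarith [mul_le_mul_of_nonneg_left ha1 hc0.le,
            mul_nonneg hc0.le ha0']
        | true =>
          have hv' : v' = false := by
            cases v' <;> simp_all
          subst hv'
          right
          norm_num
          nlinarith [mul_le_mul_of_nonneg_left ha1' hc0.le,
            mul_nonneg hc0.le ha0]

end Aux3

section Aux4
variable {β γ : ℝ} {n : ℕ → ℕ} (hβ : 0 < β) (hβγ : β ≤ γ) (hγ1 : γ ≤ 1)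

include hβ hβγ hγ1 in
lemma Iaux_append (w₁ w₂ : List Bool) : ∀ m, Iaux β γ n m (w₁ ++ w₂) ⊆ Iaux β γ n m w₁ := by
  induction w₁ with
  | nil =>
    intro m
    show Iaux β γ n m w₂ ⊆ Set.Icc 0 1
    rw [(Iaux_struct hβ hβγ hγ1 w₂ m).1]
    exact Set.Icc_subset_Icc (Iaux_struct hβ hβγ hγ1 w₂ m).2.1
      (Iaux_struct hβ hβγ hγ1 w₂ m).2.2
  | cons v t ih =>
    intro m
    exact Set.image_mono (ih (m+1))

noncomputable def WordsF (k : ℕ) : Finset (List Bool) :=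
  Finset.image (fun u : Fin k → Bool => List.ofFn u) Finset.univ

lemma mem_WordsF {k : ℕ} {w : List Bool} : w ∈ WordsF k ↔ w.length = k := by
  constructor
  · intro h
    simp only [WordsF, Finset.mem_image, Finset.mem_univ, true_and] at h
    obtain ⟨u, rfl⟩ := h
    simp
  · intro h
    subst h
    simp only [WordsF, Finset.mem_image, Finset.mem_univ, true_and]
    exact ⟨w.get, List.ofFn_get w⟩

lemma card_WordsF (k : ℕ) : (WordsF k).card ≤ 2 ^ k := by
  calc (WordsF k).card ≤ (Finset.univ : Finset (Fin k → Bool)).card :=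
        Finset.card_image_le
    _ = 2 ^ k := by simp

lemma coverNumber_le_card {X : Type*} [MetricSpace X] {δ : ℝ} {A : Set X}
    {ι : Type*} [DecidableEq ι] (s : Finset ι) (g : ι → Set X)
    (hcov : A ⊆ ⋃ i ∈ s, g i) (hdiam : ∀ i ∈ s, Metric.diam (g i) ≤ δ) :
    coverNumber δ A ≤ s.card := by
  apply Nat.sInf_le
  refine ⟨fun j => g (s.equivFin.symm j), ?_, ?_⟩
  · intro x hx
    obtain ⟨i, hi, hxi⟩ := Set.mem_iUnion₂.1 (hcov hx)
    refine Set.mem_iUnion.2 ⟨s.equivFin ⟨i, hi⟩, ?_⟩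
    simpa using hxi
  · intro j
    exact hdiam _ (s.equivFin.symm j).2

lemma pow_bound {cβ r R γ : ℝ} (hcβ0 : 0 < cβ) (hcβ1 : cβ ≤ 1) (hr : 0 < r)
    (hrR : r < R) (hγ : 0 < γ) (hγ1' : γ ≤ 1) (p : ℕ)
    (h : r * cβ / R ≤ ((2:ℝ) ^ (-(1/γ)))^p) :
    ((2:ℝ)^p : ℝ) ≤ (R/r) ^ γ * cβ⁻¹ := by
  have hR : 0 < R := lt_trans hr hrR
  have h1 : ((2:ℝ) ^ (-(1/γ)))^p = (2:ℝ) ^ (-(p/γ)) := by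
    rw [← Real.rpow_natCast ((2:ℝ)^(-(1/γ))) p, ← Real.rpow_mul (by norm_num : (0:ℝ) ≤ 2)]
    congr 1
    ring
  rw [h1] at h
  have hpos : (0:ℝ) < r * cβ / R := by positivity
  have h2 : (r * cβ / R) ^ γ ≤ ((2:ℝ)^(-(p/γ)))^γ :=
    Real.rpow_le_rpow hpos.le h hγ.le
  have h3 : ((2:ℝ)^(-(p/γ)))^γ = ((2:ℝ)^p)⁻¹ := by
    rw [← Real.rpow_mul (by norm_num : (0:ℝ) ≤ 2)]
    rw [← Real.rpow_natCast 2 p, ← Real.rpow_neg (by norm_num : (0:ℝ) ≤ 2)]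
    congr 1
    field_simp
  rw [h3] at h2
  have hp2 : (0:ℝ) < (2:ℝ)^p := by positivity
  have hq : (0:ℝ) < (r * cβ / R) ^ γ := Real.rpow_pos_of_pos hpos γ
  have h4 : ((2:ℝ)^p : ℝ) ≤ ((r * cβ / R) ^ γ)⁻¹ := by
    rw [← inv_inv ((2:ℝ)^p)]
    exact inv_anti₀ hq h2
  have h5 : ((r * cβ / R) ^ γ)⁻¹ = (R / (r * cβ)) ^ γ := by
    rw [← Real.inv_rpow hpos.le, inv_div]
  have h6 : (R / (r * cβ)) ^ γ = (R/r) ^ γ * (cβ⁻¹) ^ γ := by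
    rw [← Real.mul_rpow (by positivity) (by positivity)]
    congr 1
    field_simp
  have h7 : (cβ⁻¹) ^ γ ≤ cβ⁻¹ := by
    have hinv1 : (1:ℝ) ≤ cβ⁻¹ := one_le_inv_iff₀.2 ⟨hcβ0, hcβ1⟩
    calc (cβ⁻¹) ^ γ ≤ (cβ⁻¹) ^ (1:ℝ) :=
          Real.rpow_le_rpow_of_exponent_le hinv1 hγ1'
      _ = cβ⁻¹ := Real.rpow_one _
  calc ((2:ℝ)^p : ℝ) ≤ ((r * cβ / R) ^ γ)⁻¹ := h4
    _ = (R/r) ^ γ * (cβ⁻¹) ^ γ := by rw [h5, h6]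
    _ ≤ (R/r) ^ γ * cβ⁻¹ := by
        apply mul_le_mul_of_nonneg_left h7
        positivity

end Aux4


/-- `dim_A C(β,γ,n) ≤ γ`. -/
theorem statement8 (β γ : ℝ) (hβ : 0 < β) (hβγ : β ≤ γ) (hγ1 : γ ≤ 1)
    (n : ℕ → ℕ) (hn : StrictMono n) (hnpos : ∀ k, 0 < n k) :
    assouadDim (Cset β γ n) ≤ γ := by
  classical
  have hγ : 0 < γ := lt_of_lt_of_le hβ hβγ
  set cβ : ℝ := (2:ℝ) ^ (-(1/β)) with hcβdef
  have hcβ0 : 0 < cβ := Real.rpow_pos_of_pos two_pos _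
  have hcβ1 : cβ ≤ 1 :=
    Real.rpow_le_one_of_one_le_of_nonpos one_le_two (neg_nonpos.2 (by positivity))
  have hbdd : BddBelow {α : ℝ | 0 ≤ α ∧ ∃ c ρ : ℝ, 0 < c ∧ 0 < ρ ∧
      ∀ r R : ℝ, 0 < r → r < R → R ≤ ρ → ∀ x ∈ Cset β γ n,
        (coverNumber r (Metric.ball x R ∩ Cset β γ n) : ℝ) ≤ c * (R / r) ^ α} :=
    ⟨0, fun α hα => hα.1⟩
  apply csInf_le hbdd
  refine ⟨hγ.le, 4 * cβ⁻¹ * cβ⁻¹, 1/2, by positivity, by norm_num, ?_⟩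
  intro r R hr hrR hRρ x hx
  have hR0 : 0 < R := hr.trans hrR
  -- existence of levels
  have hex : ∀ ε : ℝ, 0 < ε → ∃ k, prodC β γ n 1 k ≤ ε := by
    intro ε hε
    obtain ⟨k, hk⟩ := exists_pow_lt_of_lt_one hε (by norm_num : (1:ℝ)/2 < 1)
    refine ⟨k, le_trans (le_trans (prodC_le_pow hβ hβγ 1 k) ?_) hk.le⟩
    exact pow_le_pow_left₀ (by positivity) (cγ_le_half hβ hβγ hγ1) k
  have hexR := hex R hR0
  have hexr := hex r hr
  set m := Nat.find hexR with hmdef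
  set q := Nat.find hexr with hqdef
  have hmR : prodC β γ n 1 m ≤ R := Nat.find_spec hexR
  have hqr : prodC β γ n 1 q ≤ r := Nat.find_spec hexr
  have hmq : m ≤ q := Nat.find_mono (fun k hk => hk.trans hrR.le)
  have hm0 : 0 < m := by
    rcases Nat.eq_zero_or_pos m with h | h
    · exfalso
      have h2 := hmR
      rw [h, prodC_zero] at h2
      linarith
    · exact h
  have hq0 : 0 < q := lt_of_lt_of_le hm0 hmq
  have hmpred : R < prodC β γ n 1 (m-1) :=
    lt_of_not_ge (Nat.find_min hexR (by omega))
  have hqpred : r < prodC β γ n 1 (q-1) :=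
    lt_of_not_ge (Nat.find_min hexr (by omega))
  -- lower bounds for the level lengths
  have hsplit_pred : ∀ k : ℕ, 0 < k →
      prodC β γ n 1 k = prodC β γ n 1 (k-1) * cseq β γ n (1 + (k-1)) := by
    intro k hk
    calc prodC β γ n 1 k = prodC β γ n 1 ((k-1) + 1) := by congr 1; omega
      _ = prodC β γ n 1 (k-1) * prodC β γ n (1 + (k-1)) 1 := prodC_add 1 (k-1) 1
      _ = prodC β γ n 1 (k-1) * cseq β γ n (1 + (k-1)) := by rw [prodC_one]
  have hℓm_lb : R * cβ ≤ prodC β γ n 1 m := by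
    rw [hsplit_pred m hm0]
    exact mul_le_mul hmpred.le (cseq_ge n hβ hβγ _) hcβ0.le (prodC_pos hβ _ _).le
  have hℓq_lb : r * cβ ≤ prodC β γ n 1 q := by
    rw [hsplit_pred q hq0]
    exact mul_le_mul hqpred.le (cseq_ge n hβ hβγ _) hcβ0.le (prodC_pos hβ _ _).le
  have hℓm_pos : 0 < prodC β γ n 1 m := prodC_pos hβ _ _
  -- ratio bound
  have hXpos : 0 < prodC β γ n (1+m) (q-m) := prodC_pos hβ _ _
  have hsplit : prodC β γ n 1 q = prodC β γ n 1 m * prodC β γ n (1+m) (q-m) := by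
    calc prodC β γ n 1 q = prodC β γ n 1 (m + (q-m)) := by congr 1; omega
      _ = prodC β γ n 1 m * prodC β γ n (1+m) (q-m) := prodC_add 1 m (q-m)
  have hX_lb : r * cβ / R ≤ prodC β γ n (1+m) (q-m) := by
    rw [div_le_iff₀ hR0]
    calc r * cβ ≤ prodC β γ n 1 q := hℓq_lb
      _ = prodC β γ n 1 m * prodC β γ n (1+m) (q-m) := hsplit
      _ ≤ R * prodC β γ n (1+m) (q-m) :=
          mul_le_mul_of_nonneg_right hmR hXpos.le
      _ = prodC β γ n (1+m) (q-m) * R := mul_comm _ _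
  have hX_ub : prodC β γ n (1+m) (q-m) ≤ ((2:ℝ)^(-(1/γ)))^(q-m) :=
    prodC_le_pow hβ hβγ (1+m) (q-m)
  have h2pow : ((2:ℝ)^(q-m) : ℝ) ≤ (R/r)^γ * cβ⁻¹ :=
    pow_bound hcβ0 hcβ1 hr hrR hγ hγ1 (q-m) (le_trans hX_lb hX_ub)
  -- the counting Finset
  set ℓm := prodC β γ n 1 m with hℓmdef
  set W : Finset (List Bool) :=
    (WordsF m).filter (fun w => (Iw β γ n w ∩ Metric.ball x R).Nonempty) with hWdef
  have hWlen : ∀ w ∈ W, w.length = m := by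
    intro w hw
    exact mem_WordsF.1 (Finset.mem_filter.1 hw).1
  have hJ : ∀ w ∈ W, Set.Ioo (lE β γ n 1 w) (lE β γ n 1 w + ℓm) ⊆
      Set.Ioo (x - R - ℓm) (x + R + ℓm) := by
    intro w hw
    obtain ⟨y, hyI, hyB⟩ := (Finset.mem_filter.1 hw).2
    have hst := (Iaux_struct (n := n) hβ hβγ hγ1 w 1).1
    rw [hWlen w hw] at hst
    rw [show Iw β γ n w = Iaux β γ n 1 w from rfl, hst] at hyI
    have hmem : x - R < y ∧ y < x + R := by
      have := mem_ball.1 hyB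
      rw [Real.dist_eq, abs_lt] at this
      constructor <;> linarith [this.1, this.2]
    exact Set.Ioo_subset_Ioo (by linarith [hyI.1, hyI.2, hmem.1, hmem.2])
      (by linarith [hyI.1, hyI.2, hmem.1, hmem.2])
  have hdisj : (↑W : Set (List Bool)).PairwiseDisjoint
      (fun w => Set.Ioo (lE β γ n 1 w) (lE β γ n 1 w + ℓm)) := by
    intro w hw w' hw' hne
    have hs := sep (n := n) hβ hβγ hγ1 w w'
      (by rw [hWlen w hw, hWlen w' hw']) hne 1
    rw [hWlen w hw, hWlen w' hw'] at hs
    simp only [Function.onFun]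
    rw [Set.disjoint_left]
    intro y hy hy'
    rcases hs with h | h <;>
      [exact absurd hy'.1 (by linarith [hy.2]); exact absurd hy.1 (by linarith [hy'.2])]
  have hvol : (W.card : ℝ) * ℓm ≤ 2*R + 2*ℓm := by
    have hmeas := measure_biUnion_finset (μ := volume) hdisj
      (fun w _ => (measurableSet_Ioo :
        MeasurableSet (Set.Ioo (lE β γ n 1 w) (lE β γ n 1 w + ℓm))))
    have hsum : ∑ w ∈ W, volume (Set.Ioo (lE β γ n 1 w) (lE β γ n 1 w + ℓm))
        = (W.card : ℝ≥0∞) * ENNReal.ofReal ℓm := by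
      rw [Finset.sum_congr rfl (fun w _ => by
        rw [Real.volume_Ioo, add_sub_cancel_left])]
      rw [Finset.sum_const, nsmul_eq_mul]
    have hle : volume (⋃ w ∈ W, Set.Ioo (lE β γ n 1 w) (lE β γ n 1 w + ℓm))
        ≤ ENNReal.ofReal (2*R + 2*ℓm) := by
      calc volume (⋃ w ∈ W, Set.Ioo (lE β γ n 1 w) (lE β γ n 1 w + ℓm))
          ≤ volume (Set.Ioo (x - R - ℓm) (x + R + ℓm)) :=
            measure_mono (Set.iUnion₂_subset hJ)
        _ = ENNReal.ofReal (2*R + 2*ℓm) := by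
            rw [Real.volume_Ioo]
            congr 1
            ring
    have hcomb : (W.card : ℝ≥0∞) * ENNReal.ofReal ℓm ≤ ENNReal.ofReal (2*R + 2*ℓm) := by
      rw [← hsum, ← hmeas]
      exact hle
    have : ENNReal.ofReal ((W.card : ℝ) * ℓm) ≤ ENNReal.ofReal (2*R + 2*ℓm) := by
      rw [ENNReal.ofReal_mul (Nat.cast_nonneg _)]
      rwa [ENNReal.ofReal_natCast]
    exact (ENNReal.ofReal_le_ofReal_iff (by nlinarith [hℓm_pos, hR0])).1 this
  have hWcard : (W.card : ℝ) ≤ 4 * cβ⁻¹ := by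
    have hcc : (0:ℝ) ≤ (W.card : ℝ) := Nat.cast_nonneg _
    have h1 : (W.card:ℝ) * (R * cβ) ≤ (W.card:ℝ) * ℓm :=
      mul_le_mul_of_nonneg_left hℓm_lb hcc
    have h2 : (W.card:ℝ) * cβ ≤ 4 := by nlinarith [hmR, hR0]
    calc (W.card:ℝ) = ((W.card:ℝ) * cβ) * cβ⁻¹ := by field_simp
      _ ≤ 4 * cβ⁻¹ :=
        mul_le_mul_of_nonneg_right h2 (inv_nonneg.2 hcβ0.le)
  -- the cover
  set T : Finset (List Bool × List Bool) := W ×ˢ WordsF (q - m) with hTdef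
  have hcov : Metric.ball x R ∩ Cset β γ n ⊆ ⋃ p ∈ T, Iw β γ n (p.1 ++ p.2) := by
    rintro y ⟨hyb, hyC⟩
    have hyq : y ∈ CsetN β γ n q := Set.mem_iInter.1 hyC q
    simp only [CsetN, Set.mem_iUnion, Set.mem_setOf_eq] at hyq
    obtain ⟨w, hwlen, hyw⟩ := hyq
    have h1 : w.take m ++ w.drop m = w := List.take_append_drop m w
    have hy1 : y ∈ Iw β γ n (w.take m) := by
      apply Iaux_append hβ hβγ hγ1 (w.take m) (w.drop m) 1
      rw [h1]
      exact hyw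
    have hw1m : (w.take m).length = m := by
      rw [List.length_take]
      omega
    have hw2 : (w.drop m).length = q - m := by
      rw [List.length_drop, hwlen]
    refine Set.mem_iUnion₂.2 ⟨(w.take m, w.drop m), ?_, ?_⟩
    · refine Finset.mem_product.2 ⟨?_, mem_WordsF.2 hw2⟩
      exact Finset.mem_filter.2 ⟨mem_WordsF.2 hw1m, ⟨y, hy1, hyb⟩⟩
    · rw [h1]
      exact hyw
  have hdiam : ∀ p ∈ T, Metric.diam (Iw β γ n (p.1 ++ p.2)) ≤ r := by
    intro p hp
    have hp1 := Finset.mem_product.1 hp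
    have hl1 : p.1.length = m := mem_WordsF.1 (Finset.mem_filter.1 hp1.1).1
    have hl2 : p.2.length = q - m := mem_WordsF.1 hp1.2
    have hlen : (p.1 ++ p.2).length = q := by
      rw [List.length_append, hl1, hl2]
      omega
    have hst := (Iaux_struct (n := n) hβ hβγ hγ1 (p.1 ++ p.2) 1).1
    rw [hlen] at hst
    rw [show Iw β γ n (p.1 ++ p.2) = Iaux β γ n 1 (p.1 ++ p.2) from rfl, hst]
    rw [Real.diam_Icc (by linarith [prodC_pos hβ (β := β) (γ := γ) (n := n) 1 q] :
      lE β γ n 1 (p.1 ++ p.2) ≤ lE β γ n 1 (p.1 ++ p.2) + prodC β γ n 1 q)]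
    simpa using hqr
  have hNle : coverNumber r (Metric.ball x R ∩ Cset β γ n) ≤ T.card :=
    coverNumber_le_card T (fun p => Iw β γ n (p.1 ++ p.2)) hcov hdiam
  have hTcard : T.card = W.card * (WordsF (q-m)).card := Finset.card_product _ _
  have hWq : ((WordsF (q-m)).card : ℝ) ≤ (2:ℝ)^(q-m) := by
    have := card_WordsF (q-m)
    exact_mod_cast this
  calc (coverNumber r (Metric.ball x R ∩ Cset β γ n) : ℝ)
      ≤ (T.card : ℝ) := Nat.cast_le.2 hNle
    _ = (W.card : ℝ) * ((WordsF (q-m)).card : ℝ) := by rw [hTcard]; push_cast; ring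
    _ ≤ (W.card : ℝ) * (2:ℝ)^(q-m) :=
        mul_le_mul_of_nonneg_left hWq (Nat.cast_nonneg _)
    _ ≤ (4 * cβ⁻¹) * ((R/r)^γ * cβ⁻¹) :=
        mul_le_mul hWcard h2pow (by positivity) (by positivity)
    _ = 4 * cβ⁻¹ * cβ⁻¹ * (R/r)^γ := by ring

end
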